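/- arXiv:2501.08802 — 2 statements merged into one kernel-verified Lean document; each statement's English description precedes it below -/
import Mathlib

section
/- In a gradual mechanism, for every pure strategy profile (s_i, s_{-i}) there exists a type θ_i of agent i and an unconditional strategy s_{θ_i} for θ_i such that (s_i, s_{-i}) and (s_{θ_i}, s_{-i}) induce the same terminal history, hence the same outcome. -/
/-! Gradual mechanisms (Chen–Wang): a finite dynamic game form with perfect recall
in which actions are non-empty subsets of types, available actions at a decision
node partition the agent's last report, and terminal outcomes are determined by
the accrued information. -/

universe u v

/-- A gradual mechanism over agents `N` with type spaces `Θ i`. -/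
structure GM (N : Type) (Θ : N → Type) : Type 1 where
  /-- histories -/
  Hist : Type
  root : Hist
  parent : Hist → Option Hist
  parent_root : parent root = none
  terminal : Hist → Prop
  /-- `report h i` is agent `i`'s last action (report) at `h`; `Θ i` at the root. -/
  report : Hist → ∀ i, Set (Θ i)
  report_root : ∀ i, report root i = Set.univ
  report_nonempty : ∀ h i, (report h i).Nonempty
  /-- active agents at a history -/
  active : Hist → N → Prop
  /-- available actions of agent `i` at history `h` -/
  avail : (h : Hist) → (i : N) → Set (Set (Θ i))
  avail_nonempty : ∀ h i a, a ∈ avail h i → a.Nonempty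
  avail_disjoint : ∀ h i a a', a ∈ avail h i → a' ∈ avail h i → a ≠ a' → a ∩ a' = ∅
  avail_cover : ∀ h i, active h i → ⋃₀ avail h i = report h i
  /-- transition: the immediate successor of `h` given an action profile -/
  child : (h : Hist) → ((i : N) → Set (Θ i)) → Option Hist
  child_parent : ∀ h a h', child h a = some h' → parent h' = some h
  child_report_active : ∀ h a h', child h a = some h' → ∀ i, active h i → report h' i = a i
  child_report_inactive : ∀ h a h', child h a = some h' → ∀ i, ¬ active h i → report h' i = report h i
  child_exists : ∀ h, ¬ terminal h → ∀ a : (i : N) → Set (Θ i),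
      (∀ i, active h i → a i ∈ avail h i) → ∃ h', child h a = some h'
  /-- information: `info i h h'` iff `h` and `h'` are in the same information set of `i`. -/
  info : N → Hist → Hist → Prop
  info_equiv : ∀ i, Equivalence (info i)
  info_active : ∀ i h h', info i h h' → active h i → active h' i
  info_avail : ∀ i h h', info i h h' → avail h i = avail h' i
  info_report : ∀ i h h', info i h h' → report h i = report h' i

namespace GM

variable {N : Type} {Θ : N → Type} {X : Type}

/-- Strict precedence of histories. -/
def Prec (G : GM N Θ) : G.Hist → G.Hist → Prop :=
  Relation.TransGen (fun h h' => G.parent h' = some h)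

/-- Weak precedence of histories. -/
def PrecEq (G : GM N Θ) : G.Hist → G.Hist → Prop :=
  Relation.ReflTransGen (fun h h' => G.parent h' = some h)

/-- The set of type profiles consistent with a history (the accrued information `Θ(h)`). -/
def TypeAt (G : GM N Θ) (h : G.Hist) : Set (∀ i, Θ i) :=
  {θ | ∀ i, θ i ∈ G.report h i}

/-- `Θ_{-i}`-information accrued at histories in a set `C`. -/
def minusTypes (G : GM N Θ) (i : N) (C : Set G.Hist) : Set (∀ j, Θ j) :=
  {θ | ∃ h ∈ C, ∀ j, j ≠ i → θ j ∈ G.report h j}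

/-- Type profiles accrued at some history of `C`. -/
def classTypes (G : GM N Θ) (C : Set G.Hist) : Set (∀ j, Θ j) :=
  {θ | ∃ h ∈ C, ∀ j, θ j ∈ G.report h j}

/-- A valid (pure, interim) strategy of agent `i`. -/
def ValidStrategy (G : GM N Θ) (i : N) (s : G.Hist → Set (Θ i)) : Prop :=
  (∀ h, G.active h i → s h ∈ G.avail h i) ∧ ∀ h h', G.info i h h' → s h = s h'

/-- A valid strategy profile. -/
def ValidProfile (G : GM N Θ) (s : ∀ i, G.Hist → Set (Θ i)) : Prop :=
  ∀ i, G.ValidStrategy i (s i)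

/-- The histories reached along the play path of a strategy profile. -/
inductive Reaches (G : GM N Θ) (s : ∀ i, G.Hist → Set (Θ i)) : G.Hist → Prop
  | root : Reaches G s G.root
  | step {h h'} : Reaches G s h → ¬ G.terminal h →
      G.child h (fun i => s i h) = some h' → Reaches G s h'

/-- A strategy of `i` is unconditional for type `θi` if it always selects the
action containing `θi` whenever `θi` is consistent with `i`'s previous report. -/
def Uncond (G : GM N Θ) (i : N) (θi : Θ i) (s : G.Hist → Set (Θ i)) : Prop :=
  G.ValidStrategy i s ∧ ∀ h, G.active h i → θi ∈ G.report h i → θi ∈ s h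

/-- `G` implements the SCF `f`: outcomes at terminal histories are assigned
according to the accrued information. -/
def Implements (G : GM N Θ) (f : (∀ i, Θ i) → X) : Prop :=
  ∀ z, G.terminal z → ∀ θ ∈ G.TypeAt z, ∀ θ' ∈ G.TypeAt z, f θ = f θ'

/-- Incentive compatibility: truth-telling (unconditional strategies) is weakly
dominant for every agent. -/
def IC [DecidableEq N] (G : GM N Θ) (f : (∀ i, Θ i) → X)
    (R : ∀ i, Θ i → X → X → Prop) : Prop :=
  ∀ i (θi : Θ i) (u : G.Hist → Set (Θ i)) (s : ∀ j, G.Hist → Set (Θ j)),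
    G.Uncond i θi u → G.ValidProfile s →
    ∀ z z', G.terminal z → G.Reaches (Function.update s i u) z →
      G.terminal z' → G.Reaches s z' →
      ∀ θ θ', θ ∈ G.TypeAt z → θ' ∈ G.TypeAt z' → R i θi (f θ) (f θ')

/-- Information sets (as sets of histories) of agent `i`. -/
def InfoClass (G : GM N Θ) (i : N) (C : Set G.Hist) : Prop :=
  ∃ h, G.active h i ∧ C = {h' | G.info i h h'}

/-- Precedence between information sets of `i`. -/
def ClassPrec (G : GM N Θ) (C C' : Set G.Hist) : Prop :=
  ∃ h ∈ C, ∃ h' ∈ C', G.Prec h h'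

/-- `C'` is an immediate successor information set of `C` (for agent `i`). -/
def ClassImmSucc (G : GM N Θ) (i : N) (C C' : Set G.Hist) : Prop :=
  G.ClassPrec C C' ∧
    ∀ D, G.InfoClass i D → D ≠ C → D ≠ C' → ¬ (G.ClassPrec C D ∧ G.ClassPrec D C')

/-- A history `h` is consistent with the partial strategy profile `s` of the
agents in `M` if some completion of `s` reaches `h`. -/
def HConsistent (G : GM N Θ) (M : Set N) (s : ∀ j, G.Hist → Set (Θ j))
    (h : G.Hist) : Prop :=
  ∃ t, G.ValidProfile t ∧ (∀ j ∈ M, t j = s j) ∧ G.Reaches t h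

/-- A type profile `θ` is consistent with the partial strategy profile `s` of
the agents in `M`. -/
def TConsistent (G : GM N Θ) (M : Set N) (s : ∀ j, G.Hist → Set (Θ j))
    (θ : ∀ i, Θ i) : Prop :=
  ∃ t, G.ValidProfile t ∧ (∀ j ∈ M, t j = s j) ∧
    ∃ z, G.terminal z ∧ G.Reaches t z ∧ θ ∈ G.TypeAt z

end GM

/-- Strategy-proofness of a social choice function. -/
def StrategyProof {N : Type} [DecidableEq N] {Θ : N → Type} {X : Type}
    (f : (∀ i, Θ i) → X) (R : ∀ i, Θ i → X → X → Prop) : Prop :=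
  ∀ i (θ : ∀ j, Θ j) (θi' : Θ i), R i (θ i) (f θ) (f (Function.update θ i θi'))

/-- In a gradual mechanism, for every pure strategy profile `(s_i, s_{-i})`
there exist a type `θi` of agent `i` and an unconditional strategy `u` for
`θi` such that `(u, s_{-i})` induces the same terminal history as
`(s_i, s_{-i})` — hence the same outcome. -/
theorem exists_unconditional_same_terminal {N : Type} [DecidableEq N]
    {Θ : N → Type} (G : GM N Θ) (s : ∀ j, G.Hist → Set (Θ j))
    (hs : G.ValidProfile s) (i : N) (z : G.Hist)
    (hz : G.terminal z) (hreach : G.Reaches s z) :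
    ∃ (θi : Θ i) (u : G.Hist → Set (Θ i)),
      G.Uncond i θi u ∧ G.Reaches (Function.update s i u) z := by
  classical
  obtain ⟨θi, hθi⟩ := G.report_nonempty z i
  set pick : Set (Set (Θ i)) → Set (Θ i) := fun A =>
    if hA : ∃ a, a ∈ A ∧ θi ∈ a then hA.choose else ∅ with hpick
  set u : G.Hist → Set (Θ i) := fun h =>
    if G.active h i ∧ θi ∈ G.report h i then pick (G.avail h i) else s i h with hu
  have hpick_mem : ∀ h, G.active h i → θi ∈ G.report h i →
      pick (G.avail h i) ∈ G.avail h i ∧ θi ∈ pick (G.avail h i) := by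
    intro h ha hr
    have hcov := G.avail_cover h i ha
    have hex : ∃ a, a ∈ G.avail h i ∧ θi ∈ a := by
      have : θi ∈ ⋃₀ G.avail h i := hcov ▸ hr
      obtain ⟨a, haA, haθ⟩ := this
      exact ⟨a, haA, haθ⟩
    simp only [hpick, dif_pos hex]
    exact ⟨hex.choose_spec.1, hex.choose_spec.2⟩
  have huniq : ∀ h a a', a ∈ G.avail h i → a' ∈ G.avail h i → θi ∈ a → θi ∈ a' →
      a = a' := by
    intro h a a' ha ha' h1 h2
    by_contra hne
    have hd := G.avail_disjoint h i a a' ha ha' hne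
    have : θi ∈ a ∩ a' := ⟨h1, h2⟩
    rw [hd] at this
    exact this
  have hsub : ∀ h a, G.active h i → a ∈ G.avail h i → a ⊆ G.report h i := by
    intro h a ha haA
    rw [← G.avail_cover h i ha]
    exact fun x hx => ⟨a, haA, hx⟩
  have hu_eq_s : ∀ h, θi ∈ s i h → u h = s i h := by
    intro h hsi
    by_cases hc : G.active h i ∧ θi ∈ G.report h i
    · have hm := hpick_mem h hc.1 hc.2
      show (if G.active h i ∧ θi ∈ G.report h i then pick (G.avail h i) else s i h) = s i h
      rw [if_pos hc]
      exact huniq h _ _ hm.1 ((hs i).1 h hc.1) hm.2 hsi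
    · show (if G.active h i ∧ θi ∈ G.report h i then pick (G.avail h i) else s i h) = s i h
      rw [if_neg hc]
  have hupd : ∀ h, u h = s i h →
      (fun j => Function.update s i u j h) = fun j => s j h := by
    intro h he
    funext j
    by_cases hj : j = i
    · subst hj; simp [he]
    · simp [Function.update_of_ne hj]
  refine ⟨θi, u, ⟨⟨?_, ?_⟩, ?_⟩, ?_⟩
  · intro h ha
    by_cases hr : θi ∈ G.report h i
    · have hc : G.active h i ∧ θi ∈ G.report h i := ⟨ha, hr⟩
      show (if G.active h i ∧ θi ∈ G.report h i then pick (G.avail h i) else s i h) ∈ G.avail h i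
      rw [if_pos hc]
      exact (hpick_mem h ha hr).1
    · have hc : ¬(G.active h i ∧ θi ∈ G.report h i) := fun hc => hr hc.2
      show (if G.active h i ∧ θi ∈ G.report h i then pick (G.avail h i) else s i h) ∈ G.avail h i
      rw [if_neg hc]
      exact (hs i).1 h ha
  · intro h h' hinfo
    have ha : G.active h i ↔ G.active h' i :=
      ⟨G.info_active i h h' hinfo, G.info_active i h' h ((G.info_equiv i).symm hinfo)⟩
    have hr := G.info_report i h h' hinfo
    have hav := G.info_avail i h h' hinfo
    have hss := (hs i).2 h h' hinfo
    simp only [hu, hr, hav, hss, ha]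
  · intro h ha hr
    have hc : G.active h i ∧ θi ∈ G.report h i := ⟨ha, hr⟩
    show θi ∈ (if G.active h i ∧ θi ∈ G.report h i then pick (G.avail h i) else s i h)
    rw [if_pos hc]
    exact (hpick_mem h ha hr).2
  · have key : ∀ w, G.Reaches s w → θi ∈ G.report w i →
        G.Reaches (Function.update s i u) w := by
      intro w hw
      induction hw with
      | root => intro _; exact .root
      | @step h h' hprev hterm hchild ih =>
        intro hθ'
        by_cases ha : G.active h i
        · have hrep : G.report h' i = s i h := G.child_report_active h _ h' hchild i ha
          have hθs : θi ∈ s i h := hrep ▸ hθ'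
          have hθh : θi ∈ G.report h i := hsub h _ ha ((hs i).1 h ha) hθs
          have := hupd h (hu_eq_s h hθs)
          exact .step (ih hθh) hterm (by rw [this]; exact hchild)
        · have hrep : G.report h' i = G.report h i :=
            G.child_report_inactive h _ h' hchild i ha
          have hθh : θi ∈ G.report h i := hrep ▸ hθ'
          have hue : u h = s i h := by
            have hc : ¬(G.active h i ∧ θi ∈ G.report h i) := fun hc => ha hc.1
            show (if G.active h i ∧ θi ∈ G.report h i then pick (G.avail h i) else s i h) = s i h
            rw [if_neg hc]
          have := hupd h hue
          exact .step (ih hθh) hterm (by rw [this]; exact hchild)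
    exact key z hreach hθi
end

section
/- If a gradual mechanism G has no splitting opportunity and G' is obtained from G by a coalescing transformation or an inverse illuminating transformation, then G' has no splitting opportunity. -/
/-! Gradual mechanisms (Chen–Wang): a finite dynamic game form with perfect recall
in which actions are non-empty subsets of types, available actions at a decision
node partition the agent's last report, and terminal outcomes are determined by
the accrued information. -/

universe u v

/-- A coalescing (COA) transformation turning `G1` into `G2`: the information
set `Cbar` of agent `i` is the unique immediate successor of her information
set `C` following the action `a`, and `i` acquires no new information at `Cbar`
(`Θ_{-i}(C) = Θ_{-i}(Cbar)`); the transformation shifts the actions available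
at `Cbar` up to `C`, replacing `a` and deleting `Cbar`.  The correspondence is
recorded, as in the paper, by outcome-preserving bijections between terminal
histories and between information sets. -/
structure COA {N : Type} {Θ : N → Type} (G1 G2 : GM N Θ) where
  i : N
  C : Set G1.Hist
  Cbar : Set G1.Hist
  hC : G1.InfoClass i C
  hCbar : G1.InfoClass i Cbar
  hne : C ≠ Cbar
  a : Set (Θ i)
  ha : ∀ h ∈ C, a ∈ G1.avail h i
  /-- `Cbar` follows the action `a` at `C` -/
  hrep : ∀ h ∈ Cbar, G1.report h i = a
  himm : G1.ClassImmSucc i C Cbar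
  /-- agent `i` acquires no further information at `Cbar` -/
  hnoinfo : G1.minusTypes i C = G1.minusTypes i Cbar
  /-- a bijection between terminal histories preserving accrued information
  (hence outcomes) -/
  T : {z : G1.Hist // G1.terminal z} ≃ {z : G2.Hist // G2.terminal z}
  hT : ∀ z, G1.TypeAt z.1 = G2.TypeAt (T z).1
  /-- for each agent `j ≠ i`, a bijection between information sets preserving
  accrued information and available actions -/
  Ij : ∀ j, j ≠ i →
      ({D : Set G1.Hist // G1.InfoClass j D} ≃ {D : Set G2.Hist // G2.InfoClass j D})
  hIj_types : ∀ j (hj : j ≠ i) D, G1.classTypes D.1 = G2.classTypes ((Ij j hj) D).1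
  hIj_avail : ∀ j (hj : j ≠ i) D, ∀ h ∈ D.1, ∀ h' ∈ ((Ij j hj) D).1,
      G1.avail h j = G2.avail h' j
  /-- for agent `i`, a bijection between her information sets other than `Cbar`
  and her information sets in `G2` -/
  Ii : {D : Set G1.Hist // G1.InfoClass i D ∧ D ≠ Cbar} ≃
      {D : Set G2.Hist // G2.InfoClass i D}
  hIi_types : ∀ D, G1.classTypes D.1 = G2.classTypes (Ii D).1
  hIi_avail_ne : ∀ D, D.1 ≠ C → ∀ h ∈ D.1, ∀ h' ∈ (Ii D).1,
      G1.avail h i = G2.avail h' i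
  /-- at (the image of) `C`, the action `a` is replaced by the actions available
  at `Cbar` -/
  hIi_avail_C : ∀ (hD : G1.InfoClass i C ∧ C ≠ Cbar), ∀ h ∈ C, ∀ hbar ∈ Cbar,
      ∀ h' ∈ (Ii ⟨C, hD⟩).1, G2.avail h' i = (G1.avail h i \ {a}) ∪ G1.avail hbar i

/-- A history weakly follows some history of the set `S`. -/
def GM.Touches {N : Type} {Θ : N → Type} (G : GM N Θ) (S : Set G.Hist)
    (h : G.Hist) : Prop :=
  h ∈ S ∨ ∃ g ∈ S, G.Prec g h

/-- An illuminating (ILL) transformation turning `G1` into `G2`: the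
information set `C` of agent `i` in `G1` is partitioned into the two non-empty
information sets `C1` and `C2` (partitioning all successor information sets of
agent `i` accordingly, to preserve perfect recall); histories, other agents'
information sets, and outcomes are unchanged. -/
structure ILL {N : Type} {Θ : N → Type} (G1 G2 : GM N Θ) where
  i : N
  /-- the identification of the (unchanged) histories -/
  e : G2.Hist ≃ G1.Hist
  e_root : e G2.root = G1.root
  e_parent : ∀ h, Option.map e (G2.parent h) = G1.parent (e h)
  e_terminal : ∀ h, G2.terminal h ↔ G1.terminal (e h)
  e_report : ∀ h j, G2.report h j = G1.report (e h) j
  e_active : ∀ h j, G2.active h j ↔ G1.active (e h) j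
  e_avail : ∀ h j, G2.avail h j = G1.avail (e h) j
  e_child : ∀ h a, Option.map e (G2.child h a) = G1.child (e h) a
  /-- other agents' information is unchanged -/
  e_info_ne : ∀ j, j ≠ i → ∀ h h', (G2.info j h h' ↔ G1.info j (e h) (e h'))
  C : Set G1.Hist
  C1 : Set G1.Hist
  C2 : Set G1.Hist
  hC : G1.InfoClass i C
  hunion : C1 ∪ C2 = C
  hdisj : C1 ∩ C2 = ∅
  hne1 : C1.Nonempty
  hne2 : C2.Nonempty
  /-- agent `i`'s information is refined exactly by distinguishing whether the
  play passed through `C1` or through `C2` -/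
  e_info_i : ∀ h h', G2.info i h h' ↔
      (G1.info i (e h) (e h') ∧ (G1.Touches C1 (e h) ↔ G1.Touches C1 (e h')))


/-- `G` has no splitting opportunity iff the set of type profiles consistent
with each terminal history is a singleton. -/
def NoSPLOpp {N : Type} {Θ : N → Type} (G : GM N Θ) : Prop :=
  ∀ z, G.terminal z → ∀ θ ∈ G.TypeAt z, ∀ θ' ∈ G.TypeAt z, θ = θ'

/-- **Lemma 1.** If a gradual mechanism `G` has no splitting opportunity and
`G'` is obtained from `G` through a coalescing or an inverse illuminating
transformation, then `G'` has no splitting opportunity. -/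
theorem no_spl_preserved {N : Type} {Θ : N → Type} (G G' : GM N Θ)
    (hG : NoSPLOpp G) (hstep : Nonempty (COA G G') ∨ Nonempty (ILL G' G)) :
    NoSPLOpp G' := by
  intro z' hz' θ hθ θ' hθ'
  rcases hstep with ⟨⟨c⟩⟩ | ⟨⟨L⟩⟩
  · set w := c.T.symm ⟨z', hz'⟩ with hw
    have hTz : c.T w = ⟨z', hz'⟩ := c.T.apply_symm_apply ⟨z', hz'⟩
    have h1 := c.hT w
    rw [hTz] at h1
    exact hG w.1 w.2 θ (h1 ▸ hθ) θ' (h1 ▸ hθ')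
  · -- ILL G' G : G1 = G', G2 = G, e : G.Hist ≃ G'.Hist
    set z := L.e.symm z' with hzdef
    have hez : L.e z = z' := L.e.apply_symm_apply z'
    have hz : G.terminal z := by
      rw [L.e_terminal z, hez]; exact hz'
    have hrep : ∀ j, G'.report z' j = G.report z j := by
      intro j; rw [← hez, ← L.e_report]
    have key : ∀ (ψ : ∀ i, Θ i), ψ ∈ G'.TypeAt z' → ψ ∈ G.TypeAt z := by
      intro ψ hψ j
      have := hψ j
      rwa [hrep j] at this
    exact hG z hz θ (key θ hθ) θ' (key θ' hθ')
end
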